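/- Let L : ℝ^d → ℝ be L-smooth, bounded below by L*, and run SGD with unbiased stochastic gradients of variance at most σ_g², using step size η = min{1/L, α/(σ_g √T)} for some α > 0. Then there is a constant C depending only on L(θ_1) − L*, α, and L such that (1/T) Σ_{t=1}^T E[‖∇L(θ_t)‖²] ≤ C(1/T + σ_g/√T). -/

import Mathlib

open MeasureTheory ProbabilityTheory
open scoped RealInnerProductSpace

section Aux

variable {F : Type*} [NormedAddCommGroup F] [InnerProductSpace ℝ F] [CompleteSpace F]

lemma sgd_grad_cont (f : F → ℝ) (L : ℝ) (hL : 0 ≤ L)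
    (hLip : ∀ x y : F, ‖gradient f x - gradient f y‖ ≤ L * ‖x - y‖) :
    Continuous (gradient f) := by
  have h : LipschitzWith (Real.toNNReal L) (gradient f) :=
    LipschitzWith.of_dist_le_mul fun a b => by
      rw [dist_eq_norm, dist_eq_norm, Real.coe_toNNReal _ hL]
      exact hLip a b
  exact h.continuous

lemma sgd_descent (f : F → ℝ) (L : ℝ) (hL : 0 ≤ L) (hdiff : Differentiable ℝ f)
    (hLip : ∀ x y : F, ‖gradient f x - gradient f y‖ ≤ L * ‖x - y‖)
    (x v : F) :
    f (x + v) ≤ f x + ⟪gradient f x, v⟫ + L / 2 * ‖v‖ ^ 2 := by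
  have hgc : Continuous (gradient f) := sgd_grad_cont f L hL hLip
  have hderiv : ∀ s : ℝ, HasDerivAt (fun s : ℝ => f (x + s • v))
      (⟪gradient f (x + s • v), v⟫) s := by
    intro s
    have h1 : HasDerivAt (fun s : ℝ => x + s • v) v s := by
      simpa using ((hasDerivAt_id s).smul_const v).const_add x
    have h2 : HasFDerivAt f ((InnerProductSpace.toDual ℝ F) (gradient f (x + s • v)))
        (x + s • v) := hasGradientAt_iff_hasFDerivAt.mp (hdiff (x + s • v)).hasGradientAt
    simpa only [InnerProductSpace.toDual_apply_apply, Function.comp_def] using h2.comp_hasDerivAt s h1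
  have hcont : Continuous fun s : ℝ => (⟪gradient f (x + s • v), v⟫ : ℝ) :=
    Continuous.inner (hgc.comp (continuous_const.add (continuous_id.smul continuous_const)))
      continuous_const
  have hftc : f (x + v) - f x = ∫ s in (0:ℝ)..1, ⟪gradient f (x + s • v), v⟫ := by
    have h := intervalIntegral.integral_eq_sub_of_hasDerivAt
      (f := fun s : ℝ => f (x + s • v)) (fun s _ => hderiv s)
      (hcont.intervalIntegrable 0 1)
    simpa using h.symm
  have hbound : ∫ s in (0:ℝ)..1, (⟪gradient f (x + s • v), v⟫ : ℝ)
      ≤ ∫ s in (0:ℝ)..1, (⟪gradient f x, v⟫ + L * ‖v‖ ^ 2 * s) := by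
    have hc2 : Continuous fun s : ℝ => (⟪gradient f x, v⟫ + L * ‖v‖ ^ 2 * s : ℝ) := by
      continuity
    apply intervalIntegral.integral_mono_on (by norm_num) (hcont.intervalIntegrable 0 1)
      (hc2.intervalIntegrable 0 1)
    intro s hs
    have h2 : (⟪gradient f (x + s • v) - gradient f x, v⟫ : ℝ) ≤ L * ‖v‖ ^ 2 * s := by
      calc (⟪gradient f (x + s • v) - gradient f x, v⟫ : ℝ)
          ≤ ‖gradient f (x + s • v) - gradient f x‖ * ‖v‖ := real_inner_le_norm _ _
        _ ≤ (L * ‖x + s • v - x‖) * ‖v‖ :=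
            mul_le_mul_of_nonneg_right (hLip _ _) (norm_nonneg v)
        _ = L * ‖v‖ ^ 2 * s := by
            rw [add_sub_cancel_left, norm_smul, Real.norm_eq_abs, abs_of_nonneg hs.1]
            ring
    have h3 : (⟪gradient f (x + s • v) - gradient f x, v⟫ : ℝ)
        = ⟪gradient f (x + s • v), v⟫ - ⟪gradient f x, v⟫ := inner_sub_left _ _ _
    linarith
  have hval : (∫ s in (0:ℝ)..1, (⟪gradient f x, v⟫ + L * ‖v‖ ^ 2 * s : ℝ))
      = ⟪gradient f x, v⟫ + L / 2 * ‖v‖ ^ 2 := by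
    have hc3 : Continuous fun s : ℝ => (L * ‖v‖ ^ 2 * s : ℝ) := by continuity
    rw [intervalIntegral.integral_add intervalIntegrable_const (hc3.intervalIntegrable 0 1),
      intervalIntegral.integral_const_mul, integral_id,
      intervalIntegral.integral_const]
    norm_num
    ring
  linarith

end Aux

section Prob

variable {Ω : Type*} {m m0 : MeasurableSpace Ω} {μ : Measure Ω}
variable {F : Type*} [NormedAddCommGroup F] [InnerProductSpace ℝ F]

lemma sgd_integrable_inner {u v : Ω → F} (hu : MemLp u 2 μ) (hv : MemLp v 2 μ) :
    Integrable (fun ω => (⟪u ω, v ω⟫ : ℝ)) μ := by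
  have husq : Integrable (fun ω => ‖u ω‖ ^ 2) μ :=
    (memLp_two_iff_integrable_sq_norm hu.aestronglyMeasurable).mp hu
  have hvsq : Integrable (fun ω => ‖v ω‖ ^ 2) μ :=
    (memLp_two_iff_integrable_sq_norm hv.aestronglyMeasurable).mp hv
  refine Integrable.mono' ((husq.add hvsq).const_mul (1/2))
    (hu.aestronglyMeasurable.inner hv.aestronglyMeasurable) ?_
  filter_upwards with ω
  have h1 : ‖(⟪u ω, v ω⟫ : ℝ)‖ ≤ ‖u ω‖ * ‖v ω‖ := norm_inner_le_norm _ _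
  have := sq_nonneg (‖u ω‖ - ‖v ω‖)
  simp only [Pi.add_apply]
  nlinarith [norm_nonneg (u ω), norm_nonneg (v ω)]

lemma sgd_integrable_mul {u v : Ω → ℝ} (hu : MemLp u 2 μ) (hv : MemLp v 2 μ) :
    Integrable (fun ω => u ω * v ω) μ := by
  have h := sgd_integrable_inner (F := ℝ) hu hv
  simpa [RCLike.inner_apply, mul_comm] using h

lemma sgd_condexp_apply (hm : m ≤ m0) (μ : Measure Ω) [IsFiniteMeasure μ] {d : ℕ}
    {g : Ω → EuclideanSpace ℝ (Fin d)} (hg : Integrable g μ) (i : Fin d) :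
    (μ[fun ω => g ω i | m]) =ᵐ[μ] fun ω => (μ[g | m]) ω i := by
  refine (ae_eq_condExp_of_forall_setIntegral_eq hm ?_ ?_ ?_ ?_).symm
  · exact ((EuclideanSpace.proj i : EuclideanSpace ℝ (Fin d) →L[ℝ] ℝ).integrable_comp hg)
  · intro s _ _
    exact ((EuclideanSpace.proj i : EuclideanSpace ℝ (Fin d) →L[ℝ] ℝ).integrable_comp
      integrable_condExp).integrableOn
  · intro s hs hμs
    have h1 : ∫ ω in s, (μ[g|m]) ω i ∂μ
        = (EuclideanSpace.proj i : EuclideanSpace ℝ (Fin d) →L[ℝ] ℝ)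
          (∫ ω in s, (μ[g|m]) ω ∂μ) := by
      rw [← ContinuousLinearMap.integral_comp_comm _ integrable_condExp.integrableOn]
      simp
    have h2 : ∫ ω in s, g ω i ∂μ
        = (EuclideanSpace.proj i : EuclideanSpace ℝ (Fin d) →L[ℝ] ℝ) (∫ ω in s, g ω ∂μ) := by
      rw [← ContinuousLinearMap.integral_comp_comm _ hg.integrableOn]
      simp
    rw [h1, h2, setIntegral_condExp hm hg hs]
  · exact StronglyMeasurable.aestronglyMeasurable
      (((EuclideanSpace.proj i :
          EuclideanSpace ℝ (Fin d) →L[ℝ] ℝ).continuous).comp_stronglyMeasurable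
        stronglyMeasurable_condExp)

end Prob

set_option maxHeartbeats 1000000 in
/-- Convergence rate of SGD (Proposition on loss convergence): for an `L`-smooth objective
`f` bounded below by `Lstar` and SGD with unbiased stochastic gradients of conditional
variance at most `σg²` and step size `η = min (1/L) (α/(σg √T))`, there is a constant `C`
(depending only on `f θ₀ − Lstar`, `α` and `L`) such that for every horizon `T ≥ 1` and
every such run of SGD, `(1/T) ∑_{t<T} E[‖∇f(θ t)‖²] ≤ C (1/T + σg/√T)`. -/
theorem sgd_convergence_rate
    {d : ℕ} {Ω : Type*} [MeasureSpace Ω] [IsProbabilityMeasure (ℙ : Measure Ω)]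
    (f : EuclideanSpace ℝ (Fin d) → ℝ) (L Lstar σg α : ℝ)
    (hL : 0 < L) (hσg : 0 < σg) (hα : 0 < α)
    (hdiff : Differentiable ℝ f)
    (hLip : ∀ θ θ' : EuclideanSpace ℝ (Fin d),
      ‖gradient f θ - gradient f θ'‖ ≤ L * ‖θ - θ'‖)
    (hbelow : ∀ θ, Lstar ≤ f θ)
    (θ0 : EuclideanSpace ℝ (Fin d)) :
    ∃ C : ℝ, ∀ (T : ℕ), 0 < T →
      ∀ (θ g : ℕ → Ω → EuclideanSpace ℝ (Fin d)),
        θ 0 = (fun _ => θ0) →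
        (∀ t, Measurable (θ t)) →
        (∀ t, MemLp (g t) 2 ℙ) →
        (∀ t ω, θ (t + 1) ω
          = θ t ω - (min (1 / L) (α / (σg * Real.sqrt T))) • g t ω) →
        (∀ t, (ℙ[g t | MeasurableSpace.comap (θ t) inferInstance]) =ᵐ[ℙ]
          fun ω => gradient f (θ t ω)) →
        (∀ t, ∀ᵐ ω ∂ℙ,
          (ℙ[fun ω' => ‖g t ω' - gradient f (θ t ω')‖ ^ 2 |
              MeasurableSpace.comap (θ t) inferInstance]) ω ≤ σg ^ 2) →
        (1 / (T : ℝ)) * ∑ t ∈ Finset.range T, ∫ ω, ‖gradient f (θ t ω)‖ ^ 2 ∂ℙ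
          ≤ C * (1 / (T : ℝ) + σg / Real.sqrt T) := by
  classical
  have hΔ : 0 ≤ f θ0 - Lstar := sub_nonneg.mpr (hbelow θ0)
  set Δ : ℝ := f θ0 - Lstar with hΔdef
  refine ⟨2 * Δ * L + 2 * Δ / α + L * α, ?_⟩
  intro T hT θ g hθ0 hθmeas hgmem hstep hunbias hvar
  have hgc : Continuous (gradient f) := sgd_grad_cont f L hL.le hLip
  set η := min (1 / L) (α / (σg * Real.sqrt T)) with hηdef
  have hTpos : (0:ℝ) < T := by exact_mod_cast hT
  have hsqrtT : 0 < Real.sqrt T := Real.sqrt_pos.mpr hTpos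
  have hηpos : 0 < η := lt_min (by positivity) (by positivity)
  have hηL : η * L ≤ 1 := by
    have h1 : η ≤ 1 / L := min_le_left _ _
    have h2 := mul_le_mul_of_nonneg_right h1 hL.le
    rwa [one_div, inv_mul_cancel₀ hL.ne'] at h2
  have hηα : η ≤ α / (σg * Real.sqrt T) := min_le_right _ _
  -- the iterates are in L²
  have hθmem : ∀ t, MemLp (θ t) 2 ℙ := by
    intro t
    induction t with
    | zero => rw [hθ0]; exact memLp_const θ0
    | succ t ih =>
        have h : θ (t + 1) = fun ω => θ t ω - η • g t ω := funext fun ω => hstep t ω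
        rw [h]
        exact ih.sub ((hgmem t).const_smul η)
  have hXmeas : ∀ t, Measurable (fun ω => gradient f (θ t ω)) :=
    fun t => hgc.measurable.comp (hθmeas t)
  have hXmem : ∀ t, MemLp (fun ω => gradient f (θ t ω)) 2 ℙ := by
    intro t
    have hb : MemLp (fun ω => ‖gradient f (0 : EuclideanSpace ℝ (Fin d))‖ + L * ‖θ t ω‖) 2 ℙ :=
      (memLp_const (‖gradient f (0 : EuclideanSpace ℝ (Fin d))‖)).add (g := fun ω => L * ‖θ t ω‖) (((hθmem t).norm).const_mul L)
    refine hb.mono' ((hXmeas t).stronglyMeasurable.aestronglyMeasurable) ?_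
    filter_upwards with ω
    have h1 := hLip (θ t ω) 0
    rw [sub_zero] at h1
    have h2 : ‖gradient f (θ t ω)‖ - ‖gradient f (0 : EuclideanSpace ℝ (Fin d))‖
        ≤ L * ‖θ t ω‖ := (norm_sub_norm_le _ _).trans h1
    linarith
  -- integrability of f ∘ θ t
  have hquad : ∀ x : EuclideanSpace ℝ (Fin d),
      f x ≤ f 0 + ‖gradient f (0 : EuclideanSpace ℝ (Fin d))‖ * ‖x‖ + L / 2 * ‖x‖ ^ 2 := by
    intro x
    have h := sgd_descent f L hL.le hdiff hLip 0 x
    rw [zero_add] at h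
    have h2 : (⟪gradient f (0 : EuclideanSpace ℝ (Fin d)), x⟫ : ℝ)
        ≤ ‖gradient f (0 : EuclideanSpace ℝ (Fin d))‖ * ‖x‖ := real_inner_le_norm _ _
    linarith
  have hfint : ∀ t, Integrable (fun ω => f (θ t ω)) ℙ := by
    intro t
    have hnorm1 : Integrable (fun ω => ‖θ t ω‖) ℙ := ((hθmem t).norm).integrable one_le_two
    have hnorm2 : Integrable (fun ω => ‖θ t ω‖ ^ 2) ℙ :=
      (memLp_two_iff_integrable_sq_norm (hθmem t).aestronglyMeasurable).mp (hθmem t)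
    refine Integrable.mono'
      (((integrable_const (|f 0| + |Lstar|)).add
        (hnorm1.const_mul ‖gradient f (0 : EuclideanSpace ℝ (Fin d))‖)).add
        (hnorm2.const_mul (L / 2)))
      (hdiff.continuous.comp_aestronglyMeasurable (hθmem t).aestronglyMeasurable) ?_
    filter_upwards with ω
    have h1 := hquad (θ t ω)
    have h2 := hbelow (θ t ω)
    simp only [Pi.add_apply]
    have hb1 : -|Lstar| ≤ Lstar := neg_abs_le Lstar
    have hb2 : 0 ≤ ‖gradient f (0 : EuclideanSpace ℝ (Fin d))‖ * ‖θ t ω‖ :=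
      mul_nonneg (norm_nonneg _) (norm_nonneg _)
    have hb3 : 0 ≤ L / 2 * ‖θ t ω‖ ^ 2 := by positivity
    have hb4 : (0:ℝ) ≤ |f 0| := abs_nonneg _
    have hb5 : f 0 ≤ |f 0| := le_abs_self _
    have hb6 : (0:ℝ) ≤ |Lstar| := abs_nonneg _
    rw [Real.norm_eq_abs, abs_le]
    constructor
    · linarith
    · linarith
  have hXsq_int : ∀ t, Integrable (fun ω => ‖gradient f (θ t ω)‖ ^ 2) ℙ := fun t =>
    (memLp_two_iff_integrable_sq_norm (hXmem t).aestronglyMeasurable).mp (hXmem t)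
  have hgsq_int : ∀ t, Integrable (fun ω => ‖g t ω‖ ^ 2) ℙ := fun t =>
    (memLp_two_iff_integrable_sq_norm (hgmem t).aestronglyMeasurable).mp (hgmem t)
  have hinner_int : ∀ t, Integrable (fun ω => (⟪gradient f (θ t ω), g t ω⟫ : ℝ)) ℙ :=
    fun t => sgd_integrable_inner (hXmem t) (hgmem t)
  have hXsq_nonneg : ∀ t, 0 ≤ ∫ ω, ‖gradient f (θ t ω)‖ ^ 2 ∂ℙ := fun t =>
    integral_nonneg fun ω => sq_nonneg _
  -- key identity: E⟪∇f(θt), gt⟫ = E‖∇f(θt)‖²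
  have hinner_eq : ∀ t, ∫ ω, (⟪gradient f (θ t ω), g t ω⟫ : ℝ) ∂ℙ
      = ∫ ω, ‖gradient f (θ t ω)‖ ^ 2 ∂ℙ := by
    intro t
    set m : MeasurableSpace Ω := MeasurableSpace.comap (θ t) inferInstance with hmdef
    have hm : m ≤ _ := (hθmeas t).comap_le
    have hθm : Measurable[m] (θ t) := Measurable.of_comap_le le_rfl
    have hXm : Measurable[m] (fun ω => gradient f (θ t ω)) := hgc.measurable.comp hθm
    have hg_int : Integrable (g t) ℙ := (hgmem t).integrable one_le_two
    have hXi_mem : ∀ i : Fin d, MemLp (fun ω => gradient f (θ t ω) i) 2 ℙ := by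
      intro i
      have h := ((EuclideanSpace.proj i :
        EuclideanSpace ℝ (Fin d) →L[ℝ] ℝ)).comp_memLp' (hXmem t)
      exact h
    have hgi_mem : ∀ i : Fin d, MemLp (fun ω => g t ω i) 2 ℙ := by
      intro i
      have h := ((EuclideanSpace.proj i :
        EuclideanSpace ℝ (Fin d) →L[ℝ] ℝ)).comp_memLp' (hgmem t)
      exact h
    have hXigi_int : ∀ i : Fin d,
        Integrable (fun ω => gradient f (θ t ω) i * g t ω i) ℙ :=
      fun i => sgd_integrable_mul (hXi_mem i) (hgi_mem i)
    have hXiXi_int : ∀ i : Fin d,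
        Integrable (fun ω => gradient f (θ t ω) i * gradient f (θ t ω) i) ℙ :=
      fun i => sgd_integrable_mul (hXi_mem i) (hXi_mem i)
    have hcoord : ∀ i : Fin d, ∫ ω, gradient f (θ t ω) i * g t ω i ∂ℙ
        = ∫ ω, gradient f (θ t ω) i * gradient f (θ t ω) i ∂ℙ := by
      intro i
      have hXi_sm : StronglyMeasurable[m] (fun ω => gradient f (θ t ω) i) := by
        have h := ((EuclideanSpace.proj i :
          EuclideanSpace ℝ (Fin d) →L[ℝ] ℝ)).continuous.measurable.comp hXm
        exact h.stronglyMeasurable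
      have hgi_int : Integrable (fun ω => g t ω i) ℙ := (hgi_mem i).integrable one_le_two
      have hcond_i : (ℙ[fun ω => g t ω i | m]) =ᵐ[ℙ] fun ω => gradient f (θ t ω) i := by
        refine (sgd_condexp_apply hm ℙ hg_int i).trans ?_
        filter_upwards [hunbias t] with ω hω
        rw [hω]
      calc ∫ ω, gradient f (θ t ω) i * g t ω i ∂ℙ
          = ∫ ω, (ℙ[fun ω' => gradient f (θ t ω') i * g t ω' i | m]) ω ∂ℙ :=
            (integral_condExp hm).symm
        _ = ∫ ω, gradient f (θ t ω) i * (ℙ[fun ω' => g t ω' i | m]) ω ∂ℙ := by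
            refine integral_congr_ae ?_
            have h := condExp_mul_of_stronglyMeasurable_left hXi_sm (hXigi_int i) hgi_int
            filter_upwards [h] with ω hω
            exact hω
        _ = ∫ ω, gradient f (θ t ω) i * gradient f (θ t ω) i ∂ℙ := by
            refine integral_congr_ae ?_
            filter_upwards [hcond_i] with ω hω
            rw [hω]
    have hinner_pt : ∀ ω, (⟪gradient f (θ t ω), g t ω⟫ : ℝ)
        = ∑ i : Fin d, gradient f (θ t ω) i * g t ω i := by
      intro ω
      simp only [PiLp.inner_apply, RCLike.inner_apply, conj_trivial, mul_comm]
    have hnorm_pt : ∀ ω, ‖gradient f (θ t ω)‖ ^ 2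
        = ∑ i : Fin d, gradient f (θ t ω) i * gradient f (θ t ω) i := by
      intro ω
      rw [← real_inner_self_eq_norm_sq]
      simp only [PiLp.inner_apply, RCLike.inner_apply, conj_trivial, mul_comm]
    simp_rw [hinner_pt, hnorm_pt]
    rw [integral_finset_sum _ (fun i _ => hXigi_int i),
      integral_finset_sum _ (fun i _ => hXiXi_int i)]
    exact Finset.sum_congr rfl fun i _ => hcoord i
  -- variance bound
  have hvar_bound : ∀ t, ∫ ω, ‖g t ω - gradient f (θ t ω)‖ ^ 2 ∂ℙ ≤ σg ^ 2 := by
    intro t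
    have hm : MeasurableSpace.comap (θ t) inferInstance ≤ _ := (hθmeas t).comap_le
    calc ∫ ω, ‖g t ω - gradient f (θ t ω)‖ ^ 2 ∂ℙ
        = ∫ ω, (ℙ[fun ω' => ‖g t ω' - gradient f (θ t ω')‖ ^ 2 |
            MeasurableSpace.comap (θ t) inferInstance]) ω ∂ℙ := (integral_condExp hm).symm
      _ ≤ ∫ _ω, σg ^ 2 ∂ℙ := by
          have hle : (ℙ[fun ω' => ‖g t ω' - gradient f (θ t ω')‖ ^ 2 |
              MeasurableSpace.comap (θ t) inferInstance]) ≤ᵐ[ℙ] fun _ω => σg ^ 2 := hvar t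
          exact integral_mono_ae integrable_condExp (integrable_const _) hle
      _ = σg ^ 2 := by simp
  -- second moment bound
  have hgsq_bound : ∀ t, ∫ ω, ‖g t ω‖ ^ 2 ∂ℙ
      ≤ ∫ ω, ‖gradient f (θ t ω)‖ ^ 2 ∂ℙ + σg ^ 2 := by
    intro t
    have hVmem : MemLp (fun ω => g t ω - gradient f (θ t ω)) 2 ℙ := (hgmem t).sub (hXmem t)
    have hV_int : Integrable (fun ω => ‖g t ω - gradient f (θ t ω)‖ ^ 2) ℙ :=
      (memLp_two_iff_integrable_sq_norm hVmem.aestronglyMeasurable).mp hVmem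
    have hVX_int : Integrable
        (fun ω => (⟪g t ω - gradient f (θ t ω), gradient f (θ t ω)⟫ : ℝ)) ℙ :=
      sgd_integrable_inner hVmem (hXmem t)
    have hpt : ∀ ω, ‖g t ω‖ ^ 2 = ‖g t ω - gradient f (θ t ω)‖ ^ 2
        + 2 * ⟪g t ω - gradient f (θ t ω), gradient f (θ t ω)⟫
        + ‖gradient f (θ t ω)‖ ^ 2 := by
      intro ω
      have h := norm_add_sq_real (g t ω - gradient f (θ t ω)) (gradient f (θ t ω))
      rw [sub_add_cancel] at h
      exact h
    have hcross : ∫ ω, (⟪g t ω - gradient f (θ t ω), gradient f (θ t ω)⟫ : ℝ) ∂ℙ = 0 := by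
      have hpt2 : ∀ ω, (⟪g t ω - gradient f (θ t ω), gradient f (θ t ω)⟫ : ℝ)
          = ⟪gradient f (θ t ω), g t ω⟫ - ‖gradient f (θ t ω)‖ ^ 2 := by
        intro ω
        rw [inner_sub_left, real_inner_self_eq_norm_sq, real_inner_comm]
      simp_rw [hpt2]
      rw [integral_sub (hinner_int t) (hXsq_int t), hinner_eq t, sub_self]
    have heq : ∫ ω, ‖g t ω‖ ^ 2 ∂ℙ
        = (∫ ω, ‖g t ω - gradient f (θ t ω)‖ ^ 2 ∂ℙ)
          + 2 * (∫ ω, (⟪g t ω - gradient f (θ t ω), gradient f (θ t ω)⟫ : ℝ) ∂ℙ)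
          + ∫ ω, ‖gradient f (θ t ω)‖ ^ 2 ∂ℙ := by
      have hI2 : Integrable (fun ω => 2 * (⟪g t ω - gradient f (θ t ω), gradient f (θ t ω)⟫ : ℝ)) ℙ :=
        hVX_int.const_mul 2
      have hI1 : Integrable (fun ω => ‖g t ω - gradient f (θ t ω)‖ ^ 2
          + 2 * (⟪g t ω - gradient f (θ t ω), gradient f (θ t ω)⟫ : ℝ)) ℙ := hV_int.add hI2
      simp_rw [hpt]
      rw [integral_add hI1 (hXsq_int t), integral_add hV_int hI2, integral_const_mul]
    rw [heq, hcross]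
    have := hvar_bound t
    linarith
  -- per-step descent in expectation
  have hstep_exp : ∀ t, ∫ ω, f (θ (t+1) ω) ∂ℙ
      ≤ ∫ ω, f (θ t ω) ∂ℙ - η / 2 * ∫ ω, ‖gradient f (θ t ω)‖ ^ 2 ∂ℙ
        + L * η ^ 2 / 2 * σg ^ 2 := by
    intro t
    have hpt : ∀ ω, f (θ (t+1) ω) ≤ f (θ t ω) - η * ⟪gradient f (θ t ω), g t ω⟫
        + L / 2 * (η ^ 2 * ‖g t ω‖ ^ 2) := by
      intro ω
      have h := sgd_descent f L hL.le hdiff hLip (θ t ω) (-(η • g t ω))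
      have hstep' : θ (t+1) ω = θ t ω + -(η • g t ω) := by
        rw [hstep t ω, sub_eq_add_neg]
      rw [← hstep'] at h
      have h1 : (⟪gradient f (θ t ω), -(η • g t ω)⟫ : ℝ)
          = -(η * ⟪gradient f (θ t ω), g t ω⟫) := by
        rw [inner_neg_right, real_inner_smul_right]
      have h2 : ‖-(η • g t ω)‖ ^ 2 = η ^ 2 * ‖g t ω‖ ^ 2 := by
        rw [norm_neg, norm_smul, Real.norm_eq_abs, abs_of_pos hηpos, mul_pow]
      rw [h1, h2] at h
      linarith
    have hint1 : ∫ ω, f (θ (t+1) ω) ∂ℙ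
        ≤ ∫ ω, (f (θ t ω) - η * ⟪gradient f (θ t ω), g t ω⟫
            + L / 2 * (η ^ 2 * ‖g t ω‖ ^ 2)) ∂ℙ :=
      integral_mono (hfint (t+1))
        (((hfint t).sub ((hinner_int t).const_mul η)).add
          (((hgsq_int t).const_mul (η ^ 2)).const_mul (L / 2))) hpt
    have hint2 : ∫ ω, (f (θ t ω) - η * ⟪gradient f (θ t ω), g t ω⟫
          + L / 2 * (η ^ 2 * ‖g t ω‖ ^ 2)) ∂ℙ
        = ∫ ω, f (θ t ω) ∂ℙ - η * ∫ ω, (⟪gradient f (θ t ω), g t ω⟫ : ℝ) ∂ℙ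
          + L / 2 * (η ^ 2 * ∫ ω, ‖g t ω‖ ^ 2 ∂ℙ) := by
      have hJ2 : Integrable (fun ω => η * (⟪gradient f (θ t ω), g t ω⟫ : ℝ)) ℙ :=
        (hinner_int t).const_mul η
      have hJ3 : Integrable (fun ω => L / 2 * (η ^ 2 * ‖g t ω‖ ^ 2)) ℙ :=
        (((hgsq_int t).const_mul (η ^ 2)).const_mul (L / 2))
      have hJ1 : Integrable (fun ω => f (θ t ω) - η * (⟪gradient f (θ t ω), g t ω⟫ : ℝ)) ℙ :=
        (hfint t).sub hJ2
      rw [integral_add hJ1 hJ3, integral_sub (hfint t) hJ2,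
        integral_const_mul, integral_const_mul, integral_const_mul]
    rw [hint2, hinner_eq t] at hint1
    have h5 : L / 2 * (η ^ 2 * ∫ ω, ‖g t ω‖ ^ 2 ∂ℙ)
        ≤ L / 2 * (η ^ 2 * ((∫ ω, ‖gradient f (θ t ω)‖ ^ 2 ∂ℙ) + σg ^ 2)) := by
      have := hgsq_bound t
      gcongr
    have h6 : 0 ≤ η * (1 - η * L) * ∫ ω, ‖gradient f (θ t ω)‖ ^ 2 ∂ℙ :=
      mul_nonneg (mul_nonneg hηpos.le (by linarith)) (hXsq_nonneg t)
    nlinarith [hint1, h5, h6]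
  -- telescoping
  have htel : ∀ n : ℕ, (∫ ω, f (θ n ω) ∂ℙ)
      + η / 2 * ∑ t ∈ Finset.range n, ∫ ω, ‖gradient f (θ t ω)‖ ^ 2 ∂ℙ
      ≤ f θ0 + n * (L * η ^ 2 / 2 * σg ^ 2) := by
    intro n
    induction n with
    | zero =>
        rw [hθ0]
        simp
    | succ n ih =>
        rw [Finset.sum_range_succ]
        have h := hstep_exp n
        push_cast
        linarith
  have hFT : Lstar ≤ ∫ ω, f (θ T ω) ∂ℙ := by
    have h := integral_mono (integrable_const Lstar) (hfint T) (fun ω => hbelow (θ T ω))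
    simpa using h
  set S := ∑ t ∈ Finset.range T, ∫ ω, ‖gradient f (θ t ω)‖ ^ 2 ∂ℙ with hS
  have hSnonneg : 0 ≤ S := Finset.sum_nonneg fun t _ => hXsq_nonneg t
  have hmain : η / 2 * S ≤ Δ + T * (L * η ^ 2 / 2 * σg ^ 2) := by
    have h := htel T
    rw [hΔdef]
    linarith
  -- arithmetic
  have hinv : 1 / η ≤ L + σg * Real.sqrt T / α := by
    rcases min_cases (1 / L) (α / (σg * Real.sqrt T)) with ⟨h1, _⟩ | ⟨h1, _⟩
    · rw [hηdef, h1, one_div_one_div]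
      have : 0 ≤ σg * Real.sqrt T / α := by positivity
      linarith
    · rw [hηdef, h1, one_div_div]
      have : (σg * Real.sqrt T) / α = σg * Real.sqrt T / α := rfl
      linarith [hL.le]
  have hstep1 : (1 / (T:ℝ)) * S ≤ 2 * Δ * (1 / (T:ℝ)) * (1 / η) + L * η * σg ^ 2 := by
    have hSle : S ≤ 2 * Δ * (1 / η) + (T:ℝ) * (L * η * σg ^ 2) := by
      have hcalc : S = (η / 2 * S) * (2 / η) := by
        field_simp
      rw [hcalc]
      calc (η / 2 * S) * (2 / η) ≤ (Δ + T * (L * η ^ 2 / 2 * σg ^ 2)) * (2 / η) :=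
            mul_le_mul_of_nonneg_right hmain (by positivity)
        _ = 2 * Δ * (1 / η) + (T:ℝ) * (L * η * σg ^ 2) := by
            field_simp
    calc (1 / (T:ℝ)) * S ≤ (1 / (T:ℝ)) * (2 * Δ * (1 / η) + (T:ℝ) * (L * η * σg ^ 2)) := by
          gcongr
      _ = 2 * Δ * (1 / (T:ℝ)) * (1 / η) + L * η * σg ^ 2 := by
          field_simp
  have hsq : Real.sqrt T * Real.sqrt T = (T:ℝ) := Real.mul_self_sqrt hTpos.le
  have hA : 2 * Δ * (1 / (T:ℝ)) * (1 / η)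
      ≤ 2 * Δ * L * (1 / (T:ℝ)) + (2 * Δ / α) * (σg / Real.sqrt T) := by
    have h1 : 2 * Δ * (1 / (T:ℝ)) * (1 / η)
        ≤ 2 * Δ * (1 / (T:ℝ)) * (L + σg * Real.sqrt T / α) := by
      have hpos : 0 ≤ 2 * Δ * (1 / (T:ℝ)) := by positivity
      exact mul_le_mul_of_nonneg_left hinv hpos
    have h2 : ∀ s : ℝ, 0 < s → s * s = (T:ℝ) →
        2 * Δ * (1 / (T:ℝ)) * (L + σg * s / α)
        = 2 * Δ * L * (1 / (T:ℝ)) + (2 * Δ / α) * (σg / s) := by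
      intro s hs hss
      rw [← hss]
      field_simp
    linarith [h2 (Real.sqrt T) hsqrtT hsq]
  have hB : L * η * σg ^ 2 ≤ L * α * (σg / Real.sqrt T) := by
    have h1 : L * η * σg ^ 2 ≤ L * (α / (σg * Real.sqrt T)) * σg ^ 2 := by
      have hpos : (0:ℝ) ≤ L * σg ^ 2 := by positivity
      nlinarith [mul_le_mul_of_nonneg_left hηα hpos]
    have h2 : L * (α / (σg * Real.sqrt T)) * σg ^ 2 = L * α * (σg / Real.sqrt T) := by
      field_simp
    linarith
  have hp : 0 ≤ 1 / (T:ℝ) := by positivity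
  have hq : 0 ≤ σg / Real.sqrt T := by positivity
  have hC1 : 0 ≤ 2 * Δ * L := by positivity
  have hC2 : 0 ≤ 2 * Δ / α + L * α := by positivity
  nlinarith [hstep1, hA, hB, mul_nonneg hC1 hq, mul_nonneg hC2 hp]
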